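/- A complete CAT(0) geodesic metric space X has the geodesic extension property (every local geodesic c : [a,b] → X with a ≠ b extends to a local geodesic on [a, b+ε] for some ε > 0) if and only if every local geodesic segment σ : [a,b] → X can be extended to a geodesic line R → X. -/

import Mathlib

set_option maxHeartbeats 1000000


/-- `γ` restricted to `[a,b]` is a unit-speed (arc-length parameterized) geodesic segment. -/
def IsGeodesicOn {X : Type*} [MetricSpace X] (γ : ℝ → X) (a b : ℝ) : Prop :=
  ∀ s ∈ Set.Icc a b, ∀ t ∈ Set.Icc a b, dist (γ s) (γ t) = |s - t|

/-- A CAT(0) (NPC) space: a geodesic metric space satisfying the triangle comparison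
inequality `d(z,x_λ)² ≤ (1-λ)d(z,x₀)² + λ d(z,x₁)² - λ(1-λ)d(x₀,x₁)²`. -/
def CAT0 (X : Type*) [MetricSpace X] : Prop :=
  (∀ x y : X, ∃ γ : ℝ → X, IsGeodesicOn γ 0 (dist x y) ∧ γ 0 = x ∧ γ (dist x y) = y) ∧
  (∀ x y z : X, ∀ γ : ℝ → X, IsGeodesicOn γ 0 (dist x y) → γ 0 = x → γ (dist x y) = y →
    ∀ l ∈ Set.Icc (0:ℝ) 1,
      dist z (γ (l * dist x y)) ^ 2 ≤
        (1 - l) * dist z x ^ 2 + l * dist z y ^ 2 - l * (1 - l) * dist x y ^ 2)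

/-- A subset is (geodesically) convex if every geodesic between two of its points lies in it. -/
def GeodConvex {X : Type*} [MetricSpace X] (F : Set X) : Prop :=
  ∀ x ∈ F, ∀ y ∈ F, ∀ γ : ℝ → X, IsGeodesicOn γ 0 (dist x y) → γ 0 = x → γ (dist x y) = y →
    ∀ t ∈ Set.Icc 0 (dist x y), γ t ∈ F


/-- `c` restricted to `[a,b]` is a local geodesic: around each parameter it is locally an
arc-length parameterized isometric embedding. -/
def IsLocalGeodesicOn {X : Type*} [MetricSpace X] (c : ℝ → X) (a b : ℝ) : Prop :=
  ∀ t ∈ Set.Icc a b, ∃ ε > (0 : ℝ),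
    ∀ s ∈ Set.Icc a b ∩ Set.Icc (t - ε) (t + ε),
      ∀ u ∈ Set.Icc a b ∩ Set.Icc (t - ε) (t + ε), dist (c s) (c u) = |s - u|

/-- The geodesic extension property: every local geodesic on a nondegenerate interval extends
to a local geodesic on a strictly larger interval. -/
def GeodesicExtensionProperty (X : Type*) [MetricSpace X] : Prop :=
  ∀ a b : ℝ, a < b → ∀ c : ℝ → X, IsLocalGeodesicOn c a b →
    ∃ ε > (0 : ℝ), ∃ c' : ℝ → X, IsLocalGeodesicOn c' a (b + ε) ∧ Set.EqOn c c' (Set.Icc a b)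

open Set

lemma geo_point_uniq {X : Type*} [MetricSpace X] (hX : CAT0 X) {x y m : X} {γ : ℝ → X}
    {α β : ℝ} (hα : 0 ≤ α) (hβ : 0 ≤ β) (hpos : 0 < α + β)
    (hxy : dist x y = α + β) (hxm : dist x m = α) (hmy : dist m y = β)
    (hγ : IsGeodesicOn γ 0 (dist x y)) (h0 : γ 0 = x) (h1 : γ (dist x y) = y) :
    γ α = m := by
  have hl : α / (α + β) ∈ Icc (0:ℝ) 1 :=
    ⟨div_nonneg hα hpos.le, div_le_one_of_le₀ (by linarith) hpos.le⟩
  have key := hX.2 x y m γ hγ h0 h1 (α / (α + β)) hl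
  rw [hxy] at key
  rw [div_mul_cancel₀ _ (ne_of_gt hpos)] at key
  rw [dist_comm x m] at hxm
  rw [hxm, hmy] at key
  have hrhs : (1 - α / (α + β)) * α ^ 2 + α / (α + β) * β ^ 2
      - α / (α + β) * (1 - α / (α + β)) * (α + β) ^ 2 = 0 := by
    field_simp
    ring
  rw [hrhs] at key
  have : dist m (γ α) = 0 := by nlinarith [dist_nonneg (x := m) (y := γ α)]
  exact (eq_of_dist_eq_zero this).symm

lemma geo_step {X : Type*} [MetricSpace X] (hX : CAT0 X) {c : ℝ → X} {a x t y : ℝ}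
    (hax : a ≤ x) (hxt : x < t) (hty : t ≤ y)
    (h1 : IsGeodesicOn c a t) (h2 : IsGeodesicOn c x y) : IsGeodesicOn c a y := by
  have key : ∀ s u : ℝ, a ≤ s → s ≤ u → u ≤ y → dist (c s) (c u) = u - s := by
    intro s u hs hsu huy
    by_cases hut : u ≤ t
    · have := h1 s ⟨hs, by linarith⟩ u ⟨by linarith, hut⟩
      rwa [abs_of_nonpos (by linarith), neg_sub] at this
    push_neg at hut
    by_cases hxs : x ≤ s
    · have := h2 s ⟨hxs, by linarith⟩ u ⟨by linarith, huy⟩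
      rwa [abs_of_nonpos (by linarith), neg_sub] at this
    push_neg at hxs
    -- s < x, t < u
    set α := t - x with hαdef
    set β := u - t with hβdef
    set M := t - s with hMdef
    have hα : 0 < α := by simp [hαdef]; linarith
    have hβ : 0 < β := by simp [hβdef]; linarith
    have dxt : dist (c x) (c t) = α := by
      have := h2 x ⟨le_refl x, by linarith⟩ t ⟨hxt.le, hty⟩
      rwa [abs_of_nonpos (by linarith), neg_sub] at this
    have dtu : dist (c t) (c u) = β := by
      have := h2 t ⟨hxt.le, hty⟩ u ⟨by linarith, huy⟩
      rwa [abs_of_nonpos (by linarith), neg_sub] at this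
    have dxu : dist (c x) (c u) = α + β := by
      have := h2 x ⟨le_refl x, by linarith⟩ u ⟨by linarith, huy⟩
      rw [abs_of_nonpos (by linarith), neg_sub] at this
      rw [this]; ring
    have dsx : dist (c s) (c x) = M - α := by
      have := h1 s ⟨hs, by linarith⟩ x ⟨by linarith, by linarith⟩
      rw [abs_of_nonpos (by linarith), neg_sub] at this
      rw [this]; ring
    have dst : dist (c s) (c t) = M := by
      have := h1 s ⟨hs, by linarith⟩ t ⟨by linarith, le_refl t⟩
      rwa [abs_of_nonpos (by linarith), neg_sub] at this
    obtain ⟨γ, hγ, hγ0, hγ1⟩ := hX.1 (c x) (c u)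
    have hγα : γ α = c t :=
      geo_point_uniq hX hα.le hβ.le (by linarith) dxu dxt dtu hγ hγ0 hγ1
    have hl : α / (α + β) ∈ Icc (0:ℝ) 1 :=
      ⟨div_nonneg hα.le (by linarith), div_le_one_of_le₀ (by linarith) (by linarith)⟩
    have key := hX.2 (c x) (c u) (c s) γ hγ hγ0 hγ1 (α / (α + β)) hl
    rw [dxu, div_mul_cancel₀ _ (by positivity : α + β ≠ 0), hγα, dst, dsx] at key
    set Q := dist (c s) (c u) with hQdef
    have hQ0 : 0 ≤ Q := dist_nonneg
    have htri : Q ≤ M + β := by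
      calc Q ≤ dist (c s) (c t) + dist (c t) (c u) := dist_triangle _ _ _
      _ = M + β := by rw [dst, dtu]
    have hMβ : 0 ≤ M + β := by nlinarith
    have hsq : (M + β) ^ 2 ≤ Q ^ 2 := by
      have hab : (0:ℝ) < α + β := by linarith
      have key2 := mul_le_mul_of_nonneg_left key hab.le
      have e1 : (α + β) * ((1 - α / (α + β)) * (M - α) ^ 2 + α / (α + β) * Q ^ 2
          - α / (α + β) * (1 - α / (α + β)) * (α + β) ^ 2)
          = β * (M - α) ^ 2 + α * Q ^ 2 - α * β * (α + β) := by
        field_simp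
        ring
      rw [e1] at key2
      have h7 : α * (M + β) ^ 2 ≤ α * Q ^ 2 := by nlinarith
      exact (mul_le_mul_iff_right₀ hα).mp h7
    have : M + β ≤ Q := (pow_le_pow_iff_left₀ hMβ hQ0 two_ne_zero).mp hsq
    have hQ : Q = M + β := le_antisymm htri this
    rw [hQ]; simp [hMdef, hβdef]
  intro s hs u hu
  rcases le_total s u with h | h
  · rw [key s u hs.1 h hu.2, abs_of_nonpos (by linarith), neg_sub]
  · rw [dist_comm, key u s hu.1 h hs.2, abs_of_nonneg (by linarith)]

lemma geo_local_to_global {X : Type*} [MetricSpace X] (hX : CAT0 X) {c : ℝ → X} {a b : ℝ}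
    (hab : a ≤ b) (h : IsLocalGeodesicOn c a b) : IsGeodesicOn c a b := by
  rcases eq_or_lt_of_le hab with rfl | hab
  · intro s hs t ht
    have hs' : s = a := le_antisymm hs.2 hs.1
    have ht' : t = a := le_antisymm ht.2 ht.1
    subst hs'; subst ht'; simp
  · set S : Set ℝ := {t | t ∈ Icc a b ∧ IsGeodesicOn c a t} with hS
    have haS : a ∈ S := by
      refine ⟨⟨le_refl a, hab.le⟩, ?_⟩
      intro s hs t ht
      have hs' : s = a := le_antisymm hs.2 hs.1
      have ht' : t = a := le_antisymm ht.2 ht.1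
      subst hs'; subst ht'; simp
    have hSne : S.Nonempty := ⟨a, haS⟩
    have hSbdd : BddAbove S := ⟨b, fun t ht => ht.1.2⟩
    set T := sSup S with hT
    have hTa : a ≤ T := le_csSup hSbdd haS
    have hTb : T ≤ b := csSup_le hSne (fun t ht => ht.1.2)
    obtain ⟨ε, hε, hloc⟩ := h T ⟨hTa, hTb⟩
    have hgeo_loc : IsGeodesicOn c (max a (T - ε)) (min b (T + ε)) := by
      intro s hs t ht
      rw [← Set.Icc_inter_Icc] at hs ht
      exact hloc s hs t ht
    set x' := max a (T - ε) with hx'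
    set y' := min b (T + ε) with hy'
    have hy'T : T ≤ y' := le_min hTb (by linarith)
    have hbS : IsGeodesicOn c a b := by
      have hTgta : a < T := by
        by_contra hcon
        push_neg at hcon
        have hTeq : T = a := le_antisymm hcon hTa
        have hx'a : x' = a := by
          rw [hx', hTeq]; exact max_eq_left (by linarith)
        have hy'gt : a < y' := by
          rw [hy', hTeq]; exact lt_min hab (by linarith)
        have : y' ∈ S := by
          refine ⟨⟨hy'gt.le, min_le_left _ _⟩, ?_⟩
          rw [← hx'a]; exact hgeo_loc
        have := le_csSup hSbdd this
        rw [← hTeq] at hy'gt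
        linarith
      have hx'T : x' < T := max_lt hTgta (by linarith)
      obtain ⟨t, htS, hxt⟩ := exists_lt_of_lt_csSup hSne hx'T
      have htT : t ≤ T := le_csSup hSbdd htS
      have hstep : IsGeodesicOn c a y' :=
        geo_step hX (le_max_left a (T - ε)) hxt (le_trans htT hy'T) htS.2 hgeo_loc
      by_cases hyb : y' = b
      · rwa [hyb] at hstep
      · exfalso
        have hy'lt : y' < b := lt_of_le_of_ne (min_le_left _ _) hyb
        have hy'S : y' ∈ S := ⟨⟨le_trans hTa hy'T, hy'lt.le⟩, hstep⟩
        have h1 := le_csSup hSbdd hy'S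
        have : y' = T + ε := by
          rcases min_cases b (T + ε) with ⟨he, hle⟩ | ⟨he, _⟩
          · rw [hy'] at hy'lt; rw [he] at hy'lt; exact absurd hy'lt (lt_irrefl b)
          · rw [hy']; exact he
        linarith
    exact hbS

lemma geo_to_local {X : Type*} [MetricSpace X] {f : ℝ → X} {a b : ℝ}
    (hf : IsGeodesicOn f a b) : IsLocalGeodesicOn f a b :=
  fun _ _ => ⟨1, one_pos, fun s hs u hu => hf s hs.1 u hu.1⟩

lemma geo_mono {X : Type*} [MetricSpace X] {f : ℝ → X} {a b a' b' : ℝ}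
    (hf : IsGeodesicOn f a b) (ha : a ≤ a') (hb : b' ≤ b) : IsGeodesicOn f a' b' :=
  fun s hs u hu => hf s ⟨le_trans ha hs.1, le_trans hs.2 hb⟩ u ⟨le_trans ha hu.1, le_trans hu.2 hb⟩

lemma geo_extend_right {X : Type*} [MetricSpace X] [CompleteSpace X] (hX : CAT0 X)
    (hE : GeodesicExtensionProperty X) {f : ℝ → X} {a d : ℝ} (had : a < d)
    (hf : IsGeodesicOn f a d) :
    ∃ g : ℝ → X, IsGeodesicOn g a (d + 1) ∧ Set.EqOn f g (Set.Icc a d) := by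
  classical
  set P : ℝ × (ℝ → X) → Prop :=
    fun p => p.1 ∈ Icc d (d + 1) ∧ IsGeodesicOn p.2 a p.1 ∧ Set.EqOn f p.2 (Set.Icc a d)
    with hP
  set r : {p // P p} → {p // P p} → Prop :=
    fun p q => p.1.1 ≤ q.1.1 ∧ Set.EqOn p.1.2 q.1.2 (Set.Icc a p.1.1) with hr
  have htrans : ∀ {p q s : {p // P p}}, r p q → r q s → r p s := by
    rintro p q s ⟨h1, h2⟩ ⟨h3, h4⟩
    exact ⟨le_trans h1 h3, fun t ht => (h2 ht).trans (h4 ⟨ht.1, le_trans ht.2 h1⟩)⟩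
  have hchains : ∀ C : Set {p // P p}, IsChain r C → ∃ ub, ∀ q ∈ C, r q ub := by
    intro C hC
    by_cases hCne : C.Nonempty
    · set Dset : Set ℝ := (fun p : {p // P p} => p.1.1) '' C with hDset
      have hDne : Dset.Nonempty := hCne.image _
      have hDbdd : BddAbove Dset := ⟨d + 1, by rintro e ⟨p, hp, rfl⟩; exact p.2.1.2⟩
      set D := sSup Dset with hD
      obtain ⟨p₀, hp₀⟩ := hCne
      have hDd : d ≤ D := le_trans p₀.2.1.1 (le_csSup hDbdd ⟨p₀, hp₀, rfl⟩)
      have hDN : D ≤ d + 1 := csSup_le hDne (by rintro e ⟨p, hp, rfl⟩; exact p.2.1.2)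
      by_cases hatt : ∃ p ∈ C, p.1.1 = D
      · obtain ⟨p, hp, hpD⟩ := hatt
        refine ⟨p, fun q hq => ?_⟩
        have hqD : q.1.1 ≤ p.1.1 := by
          rw [hpD]; exact le_csSup hDbdd ⟨q, hq, rfl⟩
        by_cases hqp : q = p
        · exact ⟨hqD, by rw [hqp]; exact fun t _ => rfl⟩
        · rcases hC hq hp hqp with h | h
          · exact h
          · exact ⟨hqD, fun t ht => (h.2 ⟨ht.1, le_trans ht.2 hqD⟩).symm⟩
      · push_neg at hatt
        have hlt : ∀ p ∈ C, p.1.1 < D := fun p hp =>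
          lt_of_le_of_ne (le_csSup hDbdd ⟨p, hp, rfl⟩) (hatt p hp)
        have hDd' : d < D := lt_of_le_of_lt p₀.2.1.1 (hlt p₀ hp₀)
        set U : ℝ → X := fun t =>
          if h : ∃ p : {p // P p}, p ∈ C ∧ t ≤ p.1.1 then h.choose.1.2 t else f t with hU
        have hagree : ∀ p ∈ C, ∀ t ∈ Icc a p.1.1, U t = p.1.2 t := by
          intro p hp t ht
          have hex : ∃ q : {p // P p}, q ∈ C ∧ t ≤ q.1.1 := ⟨p, hp, ht.2⟩
          rw [hU]; simp only
          rw [dif_pos hex]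
          obtain ⟨hqC, hqt⟩ := hex.choose_spec
          by_cases hqp : hex.choose = p
          · rw [hqp]
          · rcases hC hqC hp hqp with h | h
            · exact h.2 ⟨ht.1, hqt⟩
            · exact (h.2 ⟨ht.1, ht.2⟩).symm
        have hUgeo : ∀ s ∈ Icc a D, ∀ t ∈ Icc a D, s < D → t < D →
            dist (U s) (U t) = |s - t| := by
          intro s hs t ht hsD htD
          have : max s t < D := max_lt hsD htD
          obtain ⟨e, ⟨p, hp, rfl⟩, hgt⟩ := exists_lt_of_lt_csSup hDne this
          have hs' : s ∈ Icc a p.1.1 := ⟨hs.1, (le_max_left s t).trans hgt.le⟩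
          have ht' : t ∈ Icc a p.1.1 := ⟨ht.1, (le_max_right s t).trans hgt.le⟩
          rw [hagree p hp s hs', hagree p hp t ht']
          exact p.2.2.1 s hs' t ht'
        set φ : ℕ → ℝ := fun n => D - (D - d) * (1/2) ^ n with hφdef
        have hφmem : ∀ n, φ n ∈ Icc a D ∧ φ n < D := by
          intro n
          have h1 : (0:ℝ) < (1/2:ℝ) ^ n := by positivity
          have h2 : ((1:ℝ)/2) ^ n ≤ 1 := pow_le_one₀ (by norm_num) (by norm_num)
          constructor
          · constructor
            · simp only [hφdef]; nlinarith
            · simp only [hφdef]; nlinarith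
          · simp only [hφdef]; nlinarith
        have hφ : Filter.Tendsto φ Filter.atTop (nhds D) := by
          have h0 : Filter.Tendsto (fun n : ℕ => (D - d) * (1/2)^n) Filter.atTop (nhds 0) := by
            simpa using (tendsto_pow_atTop_nhds_zero_of_lt_one (by norm_num : (0:ℝ) ≤ 1/2)
              (by norm_num : (1:ℝ)/2 < 1)).const_mul (D - d)
          have h1 : Filter.Tendsto (fun n : ℕ => D - (D - d) * (1/2)^n) Filter.atTop
              (nhds (D - 0)) := tendsto_const_nhds.sub h0
          rw [hφdef]
          simpa using h1
        have hcauchy : CauchySeq (U ∘ φ) := by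
          rw [Metric.cauchySeq_iff]
          intro ε hε
          obtain ⟨N, hN⟩ := Metric.cauchySeq_iff.1 hφ.cauchySeq ε hε
          refine ⟨N, fun m hm n hn => ?_⟩
          have := hN m hm n hn
          rwa [Function.comp_apply, Function.comp_apply,
            hUgeo _ (hφmem m).1 _ (hφmem n).1 (hφmem m).2 (hφmem n).2, ← Real.dist_eq]
        obtain ⟨y, hy⟩ := cauchySeq_tendsto_of_complete hcauchy
        set V : ℝ → X := fun t => if t < D then U t else y with hV
        have hVU : ∀ t, t < D → V t = U t := fun t ht => by rw [hV]; simp [ht]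
        have hVD : V D = y := by rw [hV]; simp
        have hdisty : ∀ s ∈ Icc a D, s < D → dist (U s) y = D - s := by
          intro s hs hsD
          have h1 : Filter.Tendsto (fun n => dist (U s) (U (φ n))) Filter.atTop
              (nhds (dist (U s) y)) := tendsto_const_nhds.dist hy
          have h2 : (fun n => dist (U s) (U (φ n))) = fun n => |s - φ n| := by
            funext n
            exact hUgeo s hs (φ n) (hφmem n).1 hsD (hφmem n).2
          have h3 : Filter.Tendsto (fun n => |s - φ n|) Filter.atTop (nhds |s - D|) :=
            (tendsto_const_nhds.sub hφ).abs
          rw [h2] at h1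
          have := tendsto_nhds_unique h1 h3
          rw [this, abs_of_nonpos (by linarith), neg_sub]
        have hVgeo : IsGeodesicOn V a D := by
          intro s hs t ht
          rcases lt_or_eq_of_le hs.2 with hsD | hsD
          · rcases lt_or_eq_of_le ht.2 with htD | htD
            · rw [hVU s hsD, hVU t htD]; exact hUgeo s hs t ht hsD htD
            · rw [hVU s hsD, htD, hVD, hdisty s hs hsD]
              rw [abs_of_nonpos (by linarith), neg_sub]
          · rcases lt_or_eq_of_le ht.2 with htD | htD
            · rw [hVU t htD, hsD, hVD, dist_comm, hdisty t ht htD]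
              exact (abs_of_nonneg (by linarith)).symm
            · rw [hsD, htD, hVD]; simp
        refine ⟨⟨(D, V), ⟨⟨hDd, hDN⟩, hVgeo, ?_⟩⟩, ?_⟩
        · intro t ht
          have htD : t < D := lt_of_le_of_lt ht.2 hDd'
          show f t = V t
          rw [hVU t htD, hagree p₀ hp₀ t ⟨ht.1, le_trans ht.2 p₀.2.1.1⟩]
          exact p₀.2.2.2 ht
        · intro q hq
          refine ⟨le_csSup hDbdd ⟨q, hq, rfl⟩, fun t ht => ?_⟩
          have htD : t < D := lt_of_le_of_lt ht.2 (hlt q hq)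
          show (↑q : ℝ × (ℝ → X)).2 t = V t
          rw [hVU t htD]
          exact (hagree q hq t ht).symm
    · rw [Set.not_nonempty_iff_eq_empty] at hCne
      refine ⟨⟨(d, f), ⟨⟨le_refl d, by linarith⟩, hf, fun t _ => rfl⟩⟩, ?_⟩
      rw [hCne]; intro q hq; exact absurd hq (Set.notMem_empty q)
  obtain ⟨m, hm⟩ := exists_maximal_of_chains_bounded hchains htrans
  by_cases hmN : m.1.1 = d + 1
  · refine ⟨m.1.2, ?_, ?_⟩
    · rw [← hmN]; exact m.2.2.1
    · exact m.2.2.2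
  · exfalso
    have hmlt : m.1.1 < d + 1 := lt_of_le_of_ne m.2.1.2 hmN
    have ham : a < m.1.1 := lt_of_lt_of_le had m.2.1.1
    obtain ⟨ε, hε, c', hc'loc, hc'eq⟩ := hE a m.1.1 ham m.1.2 (geo_to_local m.2.2.1)
    have hc'geo : IsGeodesicOn c' a (m.1.1 + ε) :=
      geo_local_to_global hX (by linarith) hc'loc
    set e := min (m.1.1 + ε) (d + 1) with he
    have hem : m.1.1 < e := lt_min (by linarith) hmlt
    have hq : P (e, c') := by
      refine ⟨⟨le_trans m.2.1.1 hem.le, min_le_right _ _⟩,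
        geo_mono hc'geo (le_refl a) (min_le_left _ _), ?_⟩
      intro t ht
      rw [m.2.2.2 ht]
      exact hc'eq ⟨ht.1, le_trans ht.2 m.2.1.1⟩
    have hrmq : r m ⟨(e, c'), hq⟩ := ⟨hem.le, fun t ht => hc'eq ht⟩
    have := (hm _ hrmq).1
    simp only at this
    linarith

lemma geo_reverse {X : Type*} [MetricSpace X] {g : ℝ → X} {a b : ℝ}
    (hg : IsGeodesicOn g a b) : IsGeodesicOn (fun t => g (a + b - t)) a b := by
  intro s hs t ht
  have h1 : a + b - s ∈ Icc a b := ⟨by linarith [hs.2], by linarith [hs.1]⟩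
  have h2 : a + b - t ∈ Icc a b := ⟨by linarith [ht.2], by linarith [ht.1]⟩
  have := hg _ h1 _ h2
  rw [this]
  rw [show a + b - s - (a + b - t) = t - s by ring, abs_sub_comm]

lemma geo_extend_both {X : Type*} [MetricSpace X] [CompleteSpace X] (hX : CAT0 X)
    (hE : GeodesicExtensionProperty X) {f : ℝ → X} {a b : ℝ} (hab : a < b)
    (hf : IsGeodesicOn f a b) :
    ∃ g : ℝ → X, IsGeodesicOn g (a - 1) (b + 1) ∧ Set.EqOn f g (Set.Icc a b) := by
  obtain ⟨g₁, hg₁, heq₁⟩ := geo_extend_right hX hE hab hf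
  set σ := a + (b + 1) with hσ
  have hrev : IsGeodesicOn (fun t => g₁ (σ - t)) a (b + 1) := geo_reverse hg₁
  obtain ⟨g₂, hg₂, heq₂⟩ := geo_extend_right hX hE (by linarith : a < b + 1) hrev
  refine ⟨fun t => g₂ (σ - t), ?_, ?_⟩
  · intro s hs t ht
    have h1 : σ - s ∈ Icc a (b + 1 + 1) := ⟨by linarith [hs.2], by linarith [hs.1]⟩
    have h2 : σ - t ∈ Icc a (b + 1 + 1) := ⟨by linarith [ht.2], by linarith [ht.1]⟩
    have := hg₂ _ h1 _ h2
    rw [this, show σ - s - (σ - t) = t - s by ring, abs_sub_comm]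
  · intro t ht
    have h1 : σ - t ∈ Icc a (b + 1) := ⟨by linarith [ht.2], by linarith [ht.1]⟩
    have h2 := heq₂ h1
    simp only at h2
    rw [show σ - (σ - t) = t by ring] at h2
    exact (heq₁ ht).trans h2


/-- A complete CAT(0) space has the geodesic extension property iff every local geodesic
segment extends to a geodesic line `ℝ → X`. -/
theorem stmt_18 {X : Type*} [MetricSpace X] [CompleteSpace X] (hX : CAT0 X) :
    GeodesicExtensionProperty X ↔
      ∀ a b : ℝ, a < b → ∀ c : ℝ → X, IsLocalGeodesicOn c a b →
        ∃ L : ℝ → X, (∀ s t : ℝ, dist (L s) (L t) = |s - t|) ∧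
          Set.EqOn c L (Set.Icc a b) := by
  constructor
  · intro hE a b hab c hc
    have hgeo : IsGeodesicOn c a b := geo_local_to_global hX hab.le hc
    have hstep : ∀ n : ℕ, ∀ f : ℝ → X, IsGeodesicOn f (a - n) (b + n) →
        ∃ g : ℝ → X, IsGeodesicOn g (a - (n + 1 : ℕ)) (b + (n + 1 : ℕ)) ∧
          Set.EqOn f g (Set.Icc (a - n) (b + n)) := by
      intro n f hf
      have hn : (0:ℝ) ≤ (n:ℝ) := Nat.cast_nonneg n
      obtain ⟨g, hg, heq⟩ := geo_extend_both hX hE (by linarith : a - (n:ℝ) < b + n) hf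
      refine ⟨g, ?_, heq⟩
      have e1 : a - ((n + 1 : ℕ) : ℝ) = a - (n:ℝ) - 1 := by push_cast; ring
      have e2 : b + ((n + 1 : ℕ) : ℝ) = b + (n:ℝ) + 1 := by push_cast; ring
      rw [e1, e2]; exact hg
    let G : (n : ℕ) → {f : ℝ → X // IsGeodesicOn f (a - n) (b + n)} :=
      fun n => Nat.rec ⟨c, by simpa using hgeo⟩
        (fun k ih => ⟨(hstep k ih.1 ih.2).choose, (hstep k ih.1 ih.2).choose_spec.1⟩) n
    have hGsucc : ∀ n : ℕ, Set.EqOn (G n).1 (G (n+1)).1 (Set.Icc (a - n) (b + n)) :=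
      fun n => (hstep n (G n).1 (G n).2).choose_spec.2
    have hagree : ∀ m n : ℕ, m ≤ n → Set.EqOn (G m).1 (G n).1 (Set.Icc (a - m) (b + m)) := by
      intro m n hmn
      induction n with
      | zero =>
        have : m = 0 := Nat.le_zero.mp hmn
        subst this; exact fun t _ => rfl
      | succ k ih =>
        rcases Nat.lt_or_ge m (k+1) with h | h
        · have hmk : m ≤ k := Nat.lt_succ_iff.mp h
          have hcast : (m:ℝ) ≤ (k:ℝ) := Nat.cast_le.mpr hmk
          intro t ht
          exact (ih hmk ht).trans
            (hGsucc k ⟨by linarith [ht.1], by linarith [ht.2]⟩)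
        · have : m = k + 1 := le_antisymm hmn h
          subst this; exact fun t _ => rfl
    set nt : ℝ → ℕ := fun t => ⌈|t| + |a| + |b|⌉₊ with hnt
    have hcover : ∀ (t : ℝ) (n : ℕ), nt t ≤ n → t ∈ Set.Icc (a - (n:ℝ)) (b + n) := by
      intro t n hn
      have h1 : |t| + |a| + |b| ≤ (n:ℝ) :=
        le_trans (Nat.le_ceil _) (Nat.cast_le.mpr hn)
      constructor
      · have := abs_nonneg t; have := le_abs_self a; have := neg_abs_le t
        have := abs_nonneg b; linarith
      · have := le_abs_self t; have := neg_abs_le b; have := abs_nonneg a; linarith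
    set L : ℝ → X := fun t => (G (nt t)).1 t with hL
    have hLval : ∀ (t : ℝ) (n : ℕ), nt t ≤ n → L t = (G n).1 t := by
      intro t n hn
      exact hagree (nt t) n hn (hcover t (nt t) le_rfl)
    refine ⟨L, ?_, ?_⟩
    · intro s t
      set n := max (nt s) (nt t) with hn
      rw [hLval s n (le_max_left _ _), hLval t n (le_max_right _ _)]
      exact (G n).2 s (hcover s n (le_max_left _ _)) t (hcover t n (le_max_right _ _))
    · intro t ht
      have h0 : t ∈ Set.Icc (a - ((0:ℕ):ℝ)) (b + ((0:ℕ):ℝ)) := by simpa using ht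
      have := hagree 0 (nt t) (Nat.zero_le _) h0
      exact this
  · intro h a b hab c hc
    obtain ⟨L, hL, heq⟩ := h a b hab c hc
    exact ⟨1, one_pos, L, fun t _ => ⟨1, one_pos, fun s _ u _ => hL s u⟩, heq⟩
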